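/- arXiv:2106.12222 — 3 statements merged into one kernel-verified Lean document; each statement's English description precedes it below -/
import Mathlib

section
/- Let $V$ be a finite-dimensional complex inner product space, let $U$ be a unitary operator on $V$, let $q$ be a positive integer, and let $\omega \in \mathbb{C}$ be a primitive $q$-th root of unity. Suppose there exists a unitary operator $T$ on $V$ with $T U T^{-1} = \omega U$. Then $q$ divides $\dim_{\mathbb{C}} V$. -/
/-- if `U` is a unitary operator on a finite-dimensional complex
inner product space `V`, `ω` is a primitive `q`-th root of unity, and there is a
unitary `T` with `T U T⁻¹ = ω U`, then `q` divides `dim_ℂ V`. -/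
theorem primitive_root_conjugation_divides_dim
    {V : Type*} [NormedAddCommGroup V] [InnerProductSpace ℂ V]
    [FiniteDimensional ℂ V]
    (U : V ≃ₗᵢ[ℂ] V) (q : ℕ) (hq : 0 < q) (ω : ℂ) (hω : IsPrimitiveRoot ω q)
    (hT : ∃ T : V ≃ₗᵢ[ℂ] V, ∀ v : V, T (U (T.symm v)) = ω • U v) :
    q ∣ Module.finrank ℂ V := by
  obtain ⟨T, hT⟩ := hT
  set Tm := T.toLinearEquiv.toLinearMap
  set Tm' := T.symm.toLinearEquiv.toLinearMap
  set Um := U.toLinearEquiv.toLinearMap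
  have hcomp : Tm ∘ₗ Um ∘ₗ Tm' = ω • Um := by
    ext v
    simpa [Tm, Tm', Um] using hT v
  have hdet := congrArg LinearMap.det hcomp
  rw [LinearMap.det_comp, LinearMap.det_comp, LinearMap.det_smul] at hdet
  have hTT : LinearMap.det Tm * LinearMap.det Tm' = 1 := by
    rw [← LinearMap.det_comp]
    have : Tm ∘ₗ Tm' = LinearMap.id := by
      ext v; simp [Tm, Tm']
    rw [this, LinearMap.det_id]
  have hUne : LinearMap.det Um ≠ 0 := by
    have := U.toLinearEquiv.isUnit_det'
    exact this.ne_zero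
  have hω1 : ω ^ Module.finrank ℂ V = 1 := by
    have h : (LinearMap.det Tm * LinearMap.det Tm') * LinearMap.det Um
        = ω ^ Module.finrank ℂ V * LinearMap.det Um := by
      rw [← hdet]; ring
    have h2 := mul_right_cancel₀ hUne h
    rw [hTT] at h2
    exact h2.symm
  exact hω.dvd_of_pow_eq_one _ hω1
end

section
/- Let $V$ be a finite-dimensional complex inner product space, let $H$ be a linear operator on $V$, and let $U, T$ be unitary operators on $V$ that both commute with $H$. Let $p, q$ be coprime integers with $q \ge 1$, and suppose $T U T^{-1} = e^{2\pi i p / q}\, U$. Then for every $\lambda \in \mathbb{C}$, the dimension of the $\lambda$-eigenspace of $H$ is divisible by $q$; in particular, every nonzero eigenspace of $H$ has dimension at least $q$. -/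
open Complex

/-- if a linear operator `H` on a finite-dimensional complex inner
product space commutes with two unitaries `U, T` satisfying
`T U T⁻¹ = e^{2πip/q} U` with `p, q` coprime and `q ≥ 1`, then the dimension of
every eigenspace of `H` is divisible by `q`; in particular every nonzero
eigenspace of `H` has dimension at least `q`. -/
theorem lsm_degeneracy_of_projective_symmetry
    {V : Type*} [NormedAddCommGroup V] [InnerProductSpace ℂ V]
    [FiniteDimensional ℂ V]
    (H : V →ₗ[ℂ] V) (U T : V ≃ₗᵢ[ℂ] V)
    (hUH : H ∘ₗ (U.toLinearEquiv : V →ₗ[ℂ] V)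
      = (U.toLinearEquiv : V →ₗ[ℂ] V) ∘ₗ H)
    (hTH : H ∘ₗ (T.toLinearEquiv : V →ₗ[ℂ] V)
      = (T.toLinearEquiv : V →ₗ[ℂ] V) ∘ₗ H)
    (p q : ℤ) (hq : 1 ≤ q) (hpq : IsCoprime p q)
    (h : ∀ v : V, T (U (T.symm v))
      = Complex.exp (2 * Real.pi * Complex.I * p / q) • U v) :
    ∀ lam : ℂ,
      (q : ℤ) ∣ (Module.finrank ℂ (Module.End.eigenspace H lam) : ℤ) ∧
      (Module.End.eigenspace H lam ≠ ⊥ →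
        q ≤ (Module.finrank ℂ (Module.End.eigenspace H lam) : ℤ)) := by
  intro lam
  set c : ℂ := Complex.exp (2 * Real.pi * Complex.I * p / q) with hc
  have hU : ∀ v : V, H (U v) = U (H v) := fun v => LinearMap.congr_fun hUH v
  have hT : ∀ v : V, H (T v) = T (H v) := fun v => LinearMap.congr_fun hTH v
  set W := Module.End.eigenspace H lam with hW
  set n := Module.finrank ℂ W with hn
  -- invariance of W
  have hUW : ∀ v ∈ W, (U.toLinearEquiv : V →ₗ[ℂ] V) v ∈ W := by
    intro v hv
    rw [Module.End.mem_eigenspace_iff] at hv ⊢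
    simp [hU v, hv, map_smul]
  have hUW' : ∀ v ∈ W, (U.symm.toLinearEquiv : V →ₗ[ℂ] V) v ∈ W := by
    intro v hv
    rw [Module.End.mem_eigenspace_iff] at hv ⊢
    have := hU (U.symm v)
    rw [U.apply_symm_apply] at this
    rw [hv] at this
    have := congrArg U.symm this
    rw [U.symm_apply_apply] at this
    simp [← this, map_smul]
  have hTW : ∀ v ∈ W, (T.toLinearEquiv : V →ₗ[ℂ] V) v ∈ W := by
    intro v hv
    rw [Module.End.mem_eigenspace_iff] at hv ⊢
    simp [hT v, hv, map_smul]
  have hTW' : ∀ v ∈ W, (T.symm.toLinearEquiv : V →ₗ[ℂ] V) v ∈ W := by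
    intro v hv
    rw [Module.End.mem_eigenspace_iff] at hv ⊢
    have := hT (T.symm v)
    rw [T.apply_symm_apply] at this
    rw [hv] at this
    have := congrArg T.symm this
    rw [T.symm_apply_apply] at this
    simp [← this, map_smul]
  -- restrictions to W
  set A : W →ₗ[ℂ] W := (U.toLinearEquiv : V →ₗ[ℂ] V).restrict hUW with hA
  set A' : W →ₗ[ℂ] W := (U.symm.toLinearEquiv : V →ₗ[ℂ] V).restrict hUW' with hA'
  set S : W →ₗ[ℂ] W := (T.toLinearEquiv : V →ₗ[ℂ] V).restrict hTW with hS
  set S' : W →ₗ[ℂ] W := (T.symm.toLinearEquiv : V →ₗ[ℂ] V).restrict hTW' with hS'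
  have hAA' : A ∘ₗ A' = LinearMap.id := by
    ext ⟨v, hv⟩
    simp [hA, hA', LinearMap.restrict_apply]
  have hSS' : S ∘ₗ S' = LinearMap.id := by
    ext ⟨v, hv⟩
    simp [hS, hS', LinearMap.restrict_apply]
  have hdetA : LinearMap.det A ≠ 0 := by
    intro h0
    have := congrArg LinearMap.det hAA'
    rw [LinearMap.det_comp, h0, zero_mul, LinearMap.det_id] at this
    exact zero_ne_one this
  have hdetS : LinearMap.det S ≠ 0 := by
    intro h0
    have := congrArg LinearMap.det hSS'
    rw [LinearMap.det_comp, h0, zero_mul, LinearMap.det_id] at this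
    exact zero_ne_one this
  -- the commutation relation on W
  have hrel : S ∘ₗ A = c • (A ∘ₗ S) := by
    ext ⟨v, hv⟩
    have := h (T v)
    rw [T.symm_apply_apply] at this
    simpa [hA, hS, LinearMap.restrict_apply] using this
  -- take determinants
  have hdet : LinearMap.det S * LinearMap.det A
      = c ^ n * (LinearMap.det A * LinearMap.det S) := by
    have h1 := congrArg LinearMap.det hrel
    rw [LinearMap.det_comp, LinearMap.det_smul, LinearMap.det_comp] at h1
    exact h1
  have hcn : c ^ n = 1 := by
    have h3 : (c ^ n - 1) * (LinearMap.det S * LinearMap.det A) = 0 := by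
      linear_combination -hdet
    rcases mul_eq_zero.mp h3 with h4 | h4
    · exact sub_eq_zero.mp h4
    · exact absurd h4 (mul_ne_zero hdetS hdetA)
  -- from c ^ n = 1 deduce q ∣ n
  have hq0 : (q : ℂ) ≠ 0 := by
    exact_mod_cast (by omega : q ≠ 0)
  have hexp : Complex.exp ((n : ℂ) * (2 * Real.pi * Complex.I * p / q)) = 1 := by
    rw [Complex.exp_nat_mul, ← hc, hcn]
  rw [Complex.exp_eq_one_iff] at hexp
  obtain ⟨k, hk⟩ := hexp
  have hpi : (Real.pi : ℂ) ≠ 0 := by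
    exact_mod_cast Real.pi_ne_zero
  have hZ : p * (n : ℤ) = k * q := by
    have hd : (2 * (Real.pi : ℂ) * Complex.I) ≠ 0 :=
      mul_ne_zero (mul_ne_zero two_ne_zero hpi) Complex.I_ne_zero
    have hC : (2 * (Real.pi : ℂ) * Complex.I) * ((p : ℂ) * (n : ℂ))
        = (2 * (Real.pi : ℂ) * Complex.I) * ((k : ℂ) * (q : ℂ)) := by
      field_simp at hk
      linear_combination (2 * (Real.pi : ℂ) * Complex.I) * hk
    exact_mod_cast mul_left_cancel₀ hd hC
  have hqn : q ∣ (n : ℤ) := by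
    have : q ∣ p * (n : ℤ) := ⟨k, by linarith [hZ]⟩
    exact (hpq.symm).dvd_of_dvd_mul_left this
  refine ⟨hqn, ?_⟩
  intro hne
  have hiff := Submodule.finrank_eq_zero (R := ℂ) (M := V) (S := W)
  have hpos : 0 < n := Nat.pos_of_ne_zero (fun h0 => hne (hiff.mp h0))
  exact Int.le_of_dvd (by exact_mod_cast hpos) hqn
end

section
/- Let $L_x, L_y$ be positive integers. Then there exist functions $a_x, a_y : (\mathbb{Z}/L_x\mathbb{Z}) \times (\mathbb{Z}/L_y\mathbb{Z}) \to \mathbb{C}$ taking values in the unit circle $\{z \in \mathbb{C} : |z| = 1\}$ such that for every site $v = (x, y)$ the plaquette phase satisfies $a_x(x,y)\, a_y(x+1,y)\, \overline{a_x(x,y+1)}\, \overline{a_y(x,y)} = e^{2\pi i /(L_x L_y)}$. -/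
private lemma zmod_val_succ {n : ℕ} [NeZero n] (x : ZMod n) :
    (x + 1).val = (x.val + 1) % n := by
  rcases Nat.lt_or_ge 1 n with h | h
  · haveI : Fact (1 < n) := ⟨h⟩
    rw [ZMod.val_add, ZMod.val_one]
  · have hn : n = 1 := le_antisymm h (Nat.one_le_iff_ne_zero.mpr (NeZero.ne n))
    subst hn
    have h1 := ZMod.val_lt (x + 1)
    have h2 := ZMod.val_lt x
    omega

/-- existence of the string gauge: on the discrete torus
`(ℤ/Lₓ) × (ℤ/Lᵧ)` there exist unit-modulus edge phases `aₓ, aᵧ` whose oriented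
product around every plaquette equals `e^{2πi/(Lₓ Lᵧ)}`, i.e. a `U(1)` gauge
field with uniform flux `2π/(Lₓ Lᵧ)` per plaquette and total flux `2π`. -/
theorem exists_string_gauge (Lx Ly : ℕ) (hLx : 0 < Lx) (hLy : 0 < Ly) :
    ∃ ax ay : (ZMod Lx × ZMod Ly) → ℂ,
      (∀ v, ‖ax v‖ = 1 ∧ ‖ay v‖ = 1) ∧
      ∀ x : ZMod Lx, ∀ y : ZMod Ly,
        ax (x, y) * ay (x + 1, y) * star (ax (x, y + 1)) * star (ay (x, y))
          = Complex.exp (2 * Real.pi * Complex.I / (Lx * Ly)) := by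
  haveI : NeZero Lx := ⟨hLx.ne'⟩
  haveI : NeZero Ly := ⟨hLy.ne'⟩
  set ζ : ℂ := Complex.exp (2 * Real.pi * Complex.I / (Lx * Ly)) with hζ
  have hN : ((Lx : ℂ) * Ly) ≠ 0 :=
    mul_ne_zero (Nat.cast_ne_zero.mpr hLx.ne') (Nat.cast_ne_zero.mpr hLy.ne')
  have hζ0 : ζ ≠ 0 := Complex.exp_ne_zero _
  have habs : ‖ζ‖ = 1 := by
    rw [hζ, Complex.norm_exp]
    have : (2 * Real.pi * Complex.I / (Lx * Ly)).re = 0 := by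
      simp [Complex.div_re]
    rw [this, Real.exp_zero]
  have hconj : (starRingEnd ℂ) ζ = ζ⁻¹ := by
    rw [hζ, ← Complex.exp_conj, ← Complex.exp_neg]
    congr 1
    rw [map_div₀]
    simp [Complex.conj_I, neg_div, map_ofNat]
  have hstar : ∀ k : ℤ, star (ζ ^ k) = ζ ^ (-k) := by
    intro k
    rw [show star (ζ ^ k) = (starRingEnd ℂ) (ζ ^ k) from rfl, map_zpow₀, hconj,
      inv_zpow, ← zpow_neg]
  have hone : ζ ^ ((Lx : ℤ) * Ly) = 1 := by
    rw [hζ, ← Complex.exp_int_mul]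
    rw [show (((Lx : ℤ) * Ly : ℤ) : ℂ) * (2 * Real.pi * Complex.I / (Lx * Ly))
        = 2 * Real.pi * Complex.I by push_cast; field_simp; exact div_self hN]
    exact Complex.exp_two_pi_mul_I
  have final : ∀ E : ℤ, ((Lx : ℤ) * Ly) ∣ (E - 1) → ζ ^ E = ζ := by
    rintro E ⟨c, hc⟩
    have hE : E = 1 + ((Lx : ℤ) * Ly) * c := by linarith
    rw [hE, zpow_add₀ hζ0, zpow_mul, hone, one_zpow, mul_one, zpow_one]
  refine ⟨fun v => if v.1.val + 1 = Lx then ζ ^ (-((Lx : ℤ) * v.2.val)) else 1,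
          fun v => ζ ^ (v.1.val : ℤ), ?_, ?_⟩
  · intro v
    constructor
    · by_cases h : v.1.val + 1 = Lx <;> simp [h, map_zpow₀, habs]
    · simp [map_zpow₀, habs]
  · intro x y
    have hxv := ZMod.val_lt x
    have hyv := ZMod.val_lt y
    have hx1 := zmod_val_succ x
    have hy1 := zmod_val_succ y
    by_cases hx : x.val + 1 = Lx
    · have hx1' : (x + 1).val = 0 := by rw [hx1, hx, Nat.mod_self]
      have hx' : (x.val : ℤ) + 1 = Lx := by exact_mod_cast hx
      simp only [hx, hx1', if_pos, if_true, ite_true, eq_self_iff_true]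
      rw [hstar, hstar]
      by_cases hy : y.val + 1 = Ly
      · have hy1' : (y + 1).val = 0 := by rw [hy1, hy, Nat.mod_self]
        have hy' : (y.val : ℤ) + 1 = Ly := by exact_mod_cast hy
        rw [hy1']
        rw [← zpow_add₀ hζ0, ← zpow_add₀ hζ0, ← zpow_add₀ hζ0]
        refine final _ ⟨-1, ?_⟩
        push_cast
        linear_combination (-(Lx : ℤ)) * hy' - hx'
      · have hy1' : (y + 1).val = y.val + 1 := by
          rw [hy1, Nat.mod_eq_of_lt (by omega)]
        rw [hy1']
        rw [← zpow_add₀ hζ0, ← zpow_add₀ hζ0, ← zpow_add₀ hζ0]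
        refine final _ ⟨0, ?_⟩
        push_cast
        linarith
    · have hx1' : (x + 1).val = x.val + 1 := by
        rw [hx1, Nat.mod_eq_of_lt (by omega)]
      simp only [hx, hx1', if_neg, if_false, ite_false, eq_self_iff_true]
      rw [star_one, mul_one, one_mul, hstar, ← zpow_add₀ hζ0]
      refine final _ ⟨0, ?_⟩
      push_cast
      ring
end
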